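/- Let V ∈ ℝ, γ > 0, D > 0, and let (σ_μ)_{μ>0} with σ_μ = √((μ+1)Dγ). Then the drift expansion holds: −(λ_μ/(μ+1))·[(σ_μ²+V²)·erfc(−V/(σ_μ√2)) + V σ_μ √(2/π)·e^{−V²/(2σ_μ²)}] = −γ√(π(μ+1)Dγ)/(4√2) − (γ/2)V − (√(πγ)/(4√(2D(μ+1))))V² + O(μ^{−1}) as μ → ∞, with λ_μ = (1/4)√(π(μ+1)γ/(2D)). -/

import Mathlib

open MeasureTheory Real Filter Asymptotics

/-- The complementary error function `erfc(z) = (2/√π) ∫_z^∞ exp(-s²) ds`. -/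
noncomputable def erfc (z : ℝ) : ℝ :=
  (2 / Real.sqrt Real.pi) * ∫ s in Set.Ioi z, Real.exp (-s ^ 2)

lemma gauss_int : Integrable (fun s : ℝ => Real.exp (-s ^ 2)) := by
  simpa using integrable_exp_neg_mul_sq (b := 1) one_pos

lemma erfc_eq (z : ℝ) :
    erfc z = 1 - (2 / Real.sqrt Real.pi) * ∫ s in (0:ℝ)..z, Real.exp (-s ^ 2) := by
  have hint := gauss_int
  have h0 : (∫ s in Set.Ioi (0:ℝ), Real.exp (-s ^ 2)) = Real.sqrt Real.pi / 2 := by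
    simpa using integral_gaussian_Ioi 1
  have key : (∫ s in Set.Ioi z, Real.exp (-s ^ 2))
      = Real.sqrt Real.pi / 2 - ∫ s in (0:ℝ)..z, Real.exp (-s ^ 2) := by
    have h1 := intervalIntegral.integral_Iic_add_Ioi (b := z) (f := fun s : ℝ => Real.exp (-s ^ 2))
      hint.integrableOn hint.integrableOn (μ := volume)
    have h2 := intervalIntegral.integral_Iic_add_Ioi (b := (0:ℝ)) (f := fun s : ℝ => Real.exp (-s ^ 2))
      hint.integrableOn hint.integrableOn (μ := volume)
    have h3 := intervalIntegral.integral_Iic_sub_Iic (a := (0:ℝ)) (b := z)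
      (f := fun s : ℝ => Real.exp (-s ^ 2)) hint.integrableOn hint.integrableOn (μ := volume)
    rw [h0] at h2
    linarith
  rw [erfc, key]
  have hπ : Real.sqrt Real.pi ≠ 0 := by positivity
  field_simp

lemma abs_erfc_taylor (z : ℝ) :
    |erfc z - 1 + (2 / Real.sqrt Real.pi) * z| ≤ (2 / Real.sqrt Real.pi) * |z| ^ 3 := by
  rw [erfc_eq]
  have hc : Continuous (fun s : ℝ => Real.exp (-s ^ 2)) := by continuity
  have hz : (∫ s in (0:ℝ)..z, Real.exp (-s ^ 2)) - z
      = ∫ s in (0:ℝ)..z, (Real.exp (-s ^ 2) - 1) := by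
    rw [intervalIntegral.integral_sub (hc.intervalIntegrable 0 z) intervalIntegrable_const]
    simp
  have hb : ‖∫ s in (0:ℝ)..z, (Real.exp (-s ^ 2) - 1)‖ ≤ z ^ 2 * |z - 0| := by
    apply intervalIntegral.norm_integral_le_of_norm_le_const
    intro x hx
    have hx2 : x ^ 2 ≤ z ^ 2 := by
      rcases Set.mem_uIoc.1 hx with ⟨h1, h2⟩ | ⟨h1, h2⟩ <;> nlinarith
    have he : Real.exp (-x ^ 2) ≤ 1 := Real.exp_le_one_iff.2 (neg_nonpos.2 (sq_nonneg _))
    have he2 : 1 - x ^ 2 ≤ Real.exp (-x ^ 2) := by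
      have := Real.add_one_le_exp (-x ^ 2); linarith
    rw [Real.norm_eq_abs, abs_le]
    constructor <;> nlinarith
  rw [Real.norm_eq_abs, sub_zero] at hb
  have h2 : (0:ℝ) ≤ 2 / Real.sqrt Real.pi := by positivity
  rw [show (1 - (2 / Real.sqrt Real.pi) * (∫ s in (0:ℝ)..z, Real.exp (-s ^ 2)) - 1
      + (2 / Real.sqrt Real.pi) * z)
      = -((2 / Real.sqrt Real.pi) * ((∫ s in (0:ℝ)..z, Real.exp (-s ^ 2)) - z)) by ring,
    abs_neg, abs_mul, abs_of_nonneg h2, hz]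
  apply mul_le_mul_of_nonneg_left _ h2
  calc |∫ s in (0:ℝ)..z, (Real.exp (-s ^ 2) - 1)| ≤ z ^ 2 * |z| := hb
    _ = |z| ^ 3 := by rw [← sq_abs]; ring

lemma exp_bound (x : ℝ) (hx : 0 ≤ x) : |Real.exp (-x) - 1| ≤ x := by
  have e1 : Real.exp (-x) ≤ 1 := Real.exp_le_one_iff.2 (neg_nonpos.2 hx)
  have e2 := Real.add_one_le_exp (-x)
  rw [abs_le]
  constructor <;> linarith

lemma key_id {V γ μ t d g p r A E : ℝ} (ht0 : 0 < t) (hd0 : 0 < d) (hg0 : 0 < g)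
    (hp0 : 0 < p) (hr0 : 0 < r) (ht2 : t ^ 2 = μ + 1) (hg2 : g ^ 2 = γ) (hr2 : r ^ 2 = 2) :
    -(1 / 4 * (p * t * g / (r * d)) / (μ + 1)) *
        (((t * d * g) ^ 2 + V ^ 2) * (1 - 2 / p * (-V / (t * d * g * r)) + A)
          + V * (t * d * g) * (r / p) * (1 + E)) -
        (-(γ * (p * t * d * g)) / (4 * r) - γ / 2 * V - p * g / (4 * (r * d * t)) * V ^ 2)
      = -(p * g / (4 * r * d * t)) *
        (((t * d * g) ^ 2 + V ^ 2) * A + V ^ 2 * (2 / p) * (-(-V / (t * d * g * r)))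
          + V * (t * d * g) * (r / p) * E) := by
  rw [← ht2, ← hg2]
  field_simp
  linear_combination (2 * t ^ 2 * g ^ 2 * d ^ 2 * V) * hr2

lemma hval_id {W t d g p r : ℝ} (ht0 : 0 < t) (hd0 : 0 < d) (hg0 : 0 < g)
    (hp0 : 0 < p) (hr0 : 0 < r) (hr2 : r ^ 2 = 2) :
    (p * g / (4 * r * d * t)) *
        (((t * d * g) ^ 2 + W ^ 2) * (2 / p * (W / (t * d * g * r)) ^ 3)
          + W ^ 2 * (2 / p) * (W / (t * d * g * r))
          + W * (t * d * g) * (r / p) * (W ^ 2 / (2 * (t * d * g) ^ 2)))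
      = W ^ 3 / (2 * d ^ 2 * t ^ 2) + W ^ 5 / (8 * d ^ 4 * g ^ 2 * t ^ 4) := by
  field_simp
  linear_combination (-8 * (r ^ 2 + 2) * W ^ 5
    - 8 * (3 * r ^ 2 + 2) * g ^ 2 * d ^ 2 * t ^ 2 * W ^ 3) * hr2

lemma bound_main {V γ D μ t d g p r A E : ℝ} (hγ : 0 < γ) (hD : 0 < D) (hμ : 1 ≤ μ)
    (ht0 : 0 < t) (hd0 : 0 < d) (hg0 : 0 < g) (hp0 : 0 < p) (hr0 : 0 < r)
    (ht2 : t ^ 2 = μ + 1) (hd2 : d ^ 2 = D) (hg2 : g ^ 2 = γ) (hr2 : r ^ 2 = 2)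
    (hA : |A| ≤ 2 / p * |(-V / (t * d * g * r))| ^ 3)
    (hE : |E| ≤ V ^ 2 / (2 * (t * d * g) ^ 2)) :
    |-(p * g / (4 * r * d * t)) *
        (((t * d * g) ^ 2 + V ^ 2) * A + V ^ 2 * (2 / p) * (-(-V / (t * d * g * r)))
          + V * (t * d * g) * (r / p) * E)|
      ≤ (|V| ^ 3 / (2 * D) + |V| ^ 5 / (8 * D ^ 2 * γ)) * |μ⁻¹| := by
  have hμ0 : (0:ℝ) < μ := lt_of_lt_of_le one_pos hμ
  have h_tdg : 0 < t * d * g := mul_pos (mul_pos ht0 hd0) hg0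
  have h_tdgr : 0 < t * d * g * r := mul_pos h_tdg hr0
  have hcoef : 0 < p * g / (4 * r * d * t) :=
    div_pos (mul_pos hp0 hg0)
      (mul_pos (mul_pos (mul_pos (by norm_num : (0:ℝ) < 4) hr0) hd0) ht0)
  have hzabs : |(-V / (t * d * g * r))| = |V| / (t * d * g * r) := by
    rw [abs_div, abs_neg, abs_of_pos h_tdgr]
  have h2p : (0:ℝ) ≤ 2 / p := le_of_lt (div_pos two_pos hp0)
  have t1 : |((t * d * g) ^ 2 + V ^ 2) * A|
      ≤ ((t * d * g) ^ 2 + V ^ 2) * (2 / p * (|V| / (t * d * g * r)) ^ 3) := by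
    rw [abs_mul, abs_of_nonneg (by positivity : (0:ℝ) ≤ (t * d * g) ^ 2 + V ^ 2), ← hzabs]
    exact mul_le_mul_of_nonneg_left hA (by positivity)
  have t2 : |V ^ 2 * (2 / p) * (-(-V / (t * d * g * r)))|
      = V ^ 2 * (2 / p) * (|V| / (t * d * g * r)) := by
    rw [abs_mul, abs_neg, hzabs, abs_mul, abs_of_nonneg (sq_nonneg V), abs_of_nonneg h2p]
  have t3 : |V * (t * d * g) * (r / p) * E|
      ≤ |V| * (t * d * g) * (r / p) * (V ^ 2 / (2 * (t * d * g) ^ 2)) := by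
    rw [abs_mul, abs_mul, abs_mul, abs_of_pos h_tdg, abs_of_pos (div_pos hr0 hp0)]
    exact mul_le_mul_of_nonneg_left hE
      (mul_nonneg (mul_nonneg (abs_nonneg V) h_tdg.le) (div_pos hr0 hp0).le)
  have hW : V ^ 2 = |V| ^ 2 := (sq_abs V).symm
  calc |-(p * g / (4 * r * d * t)) *
        (((t * d * g) ^ 2 + V ^ 2) * A + V ^ 2 * (2 / p) * (-(-V / (t * d * g * r)))
          + V * (t * d * g) * (r / p) * E)|
      = (p * g / (4 * r * d * t)) *
        |((t * d * g) ^ 2 + V ^ 2) * A + V ^ 2 * (2 / p) * (-(-V / (t * d * g * r)))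
          + V * (t * d * g) * (r / p) * E| := by
        rw [abs_mul, abs_neg, abs_of_pos hcoef]
    _ ≤ (p * g / (4 * r * d * t)) *
        (((t * d * g) ^ 2 + V ^ 2) * (2 / p * (|V| / (t * d * g * r)) ^ 3)
          + V ^ 2 * (2 / p) * (|V| / (t * d * g * r))
          + |V| * (t * d * g) * (r / p) * (V ^ 2 / (2 * (t * d * g) ^ 2))) := by
        refine mul_le_mul_of_nonneg_left ((abs_add_three _ _ _).trans ?_) hcoef.le
        exact add_le_add (add_le_add t1 t2.le) t3
    _ = (p * g / (4 * r * d * t)) *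
        (((t * d * g) ^ 2 + |V| ^ 2) * (2 / p * (|V| / (t * d * g * r)) ^ 3)
          + |V| ^ 2 * (2 / p) * (|V| / (t * d * g * r))
          + |V| * (t * d * g) * (r / p) * (|V| ^ 2 / (2 * (t * d * g) ^ 2))) := by
        rw [hW]
    _ = |V| ^ 3 / (2 * d ^ 2 * t ^ 2) + |V| ^ 5 / (8 * d ^ 4 * g ^ 2 * t ^ 4) :=
        hval_id ht0 hd0 hg0 hp0 hr0 hr2
    _ ≤ (|V| ^ 3 / (2 * D) + |V| ^ 5 / (8 * D ^ 2 * γ)) * |μ⁻¹| := by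
        rw [abs_of_pos (inv_pos.2 hμ0), ← hd2, ← hg2]
        have hmu1 : μ ≤ t ^ 2 := by rw [ht2]; linarith
        have hmu2 : μ ≤ t ^ 4 := by nlinarith
        have i1 : (t ^ 2)⁻¹ ≤ μ⁻¹ := by
          apply inv_anti₀ hμ0 hmu1
        have i2 : (t ^ 4)⁻¹ ≤ μ⁻¹ := by
          apply inv_anti₀ hμ0 hmu2
        have e1 : |V| ^ 3 / (2 * d ^ 2 * t ^ 2) = |V| ^ 3 / (2 * d ^ 2) * (t ^ 2)⁻¹ := by ring
        have e2 : |V| ^ 5 / (8 * d ^ 4 * g ^ 2 * t ^ 4)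
            = |V| ^ 5 / (8 * (d ^ 2) ^ 2 * g ^ 2) * (t ^ 4)⁻¹ := by ring
        rw [e1, e2, add_mul]
        exact add_le_add
          (mul_le_mul_of_nonneg_left i1 (by positivity))
          (mul_le_mul_of_nonneg_left i2 (by positivity))

/-- Taylor expansion of the exact drift coefficient `α(V)` of the 1D MD model [A]:
with `λ_μ = (1/4)√(π(μ+1)γ/(2D))` and `σ_μ = √((μ+1)Dγ)`,
`α(V) = -γ√(π(μ+1)Dγ)/(4√2) - (γ/2)V - (√(πγ)/(4√(2D(μ+1))))V² + O(μ⁻¹)`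
as `μ → ∞`. -/
theorem stmt_13 (V γ D : ℝ) (hγ : 0 < γ) (hD : 0 < D) :
    (fun μ : ℝ =>
        (-(((1 / 4) * Real.sqrt (Real.pi * (μ + 1) * γ / (2 * D))) / (μ + 1)) *
            ((Real.sqrt ((μ + 1) * D * γ) ^ 2 + V ^ 2) *
                erfc (-V / (Real.sqrt ((μ + 1) * D * γ) * Real.sqrt 2)) +
              V * Real.sqrt ((μ + 1) * D * γ) * Real.sqrt (2 / Real.pi) *
                Real.exp (-V ^ 2 / (2 * Real.sqrt ((μ + 1) * D * γ) ^ 2)))) -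
          (-(γ * Real.sqrt (Real.pi * (μ + 1) * D * γ)) / (4 * Real.sqrt 2) -
            (γ / 2) * V -
            (Real.sqrt (Real.pi * γ) / (4 * Real.sqrt (2 * D * (μ + 1)))) * V ^ 2)) =O[atTop]
      fun μ : ℝ => μ⁻¹ := by
  have hπ := Real.pi_pos
  rw [Asymptotics.isBigO_iff]
  refine ⟨|V| ^ 3 / (2 * D) + |V| ^ 5 / (8 * D ^ 2 * γ), ?_⟩
  filter_upwards [Filter.eventually_ge_atTop (1 : ℝ)] with μ hμ
  have hm : (0:ℝ) < μ + 1 := by linarith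
  have h1 : Real.sqrt (Real.pi * (μ + 1) * γ / (2 * D))
      = Real.sqrt Real.pi * Real.sqrt (μ + 1) * Real.sqrt γ / (Real.sqrt 2 * Real.sqrt D) := by
    rw [Real.sqrt_div (by positivity), Real.sqrt_mul (by positivity), Real.sqrt_mul hπ.le,
      Real.sqrt_mul (by norm_num)]
  have h2 : Real.sqrt ((μ + 1) * D * γ)
      = Real.sqrt (μ + 1) * Real.sqrt D * Real.sqrt γ := by
    rw [Real.sqrt_mul (by positivity), Real.sqrt_mul hm.le]
  have h3 : Real.sqrt (2 / Real.pi) = Real.sqrt 2 / Real.sqrt Real.pi :=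
    Real.sqrt_div (by norm_num) _
  have h4 : Real.sqrt (Real.pi * (μ + 1) * D * γ)
      = Real.sqrt Real.pi * Real.sqrt (μ + 1) * Real.sqrt D * Real.sqrt γ := by
    rw [Real.sqrt_mul (by positivity), Real.sqrt_mul (by positivity), Real.sqrt_mul hπ.le]
  have h5 : Real.sqrt (Real.pi * γ) = Real.sqrt Real.pi * Real.sqrt γ :=
    Real.sqrt_mul hπ.le _
  have h6 : Real.sqrt (2 * D * (μ + 1)) = Real.sqrt 2 * Real.sqrt D * Real.sqrt (μ + 1) := by
    rw [Real.sqrt_mul (by positivity), Real.sqrt_mul (by norm_num)]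
  have ht0 : 0 < Real.sqrt (μ + 1) := Real.sqrt_pos.2 hm
  have hd0 : 0 < Real.sqrt D := Real.sqrt_pos.2 hD
  have hg0 : 0 < Real.sqrt γ := Real.sqrt_pos.2 hγ
  have hp0 : 0 < Real.sqrt Real.pi := Real.sqrt_pos.2 hπ
  have hr0 : 0 < Real.sqrt 2 := Real.sqrt_pos.2 (by norm_num)
  have ht2 : Real.sqrt (μ + 1) ^ 2 = μ + 1 := Real.sq_sqrt hm.le
  have hd2 : Real.sqrt D ^ 2 = D := Real.sq_sqrt hD.le
  have hg2 : Real.sqrt γ ^ 2 = γ := Real.sq_sqrt hγ.le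
  have hr2 : Real.sqrt 2 ^ 2 = 2 := Real.sq_sqrt (by norm_num)
  simp only [Real.norm_eq_abs]
  rw [h1, h2, h3, h4, h5, h6]
  set t := Real.sqrt (μ + 1)
  set d := Real.sqrt D
  set g := Real.sqrt γ
  set p := Real.sqrt Real.pi
  set r := Real.sqrt 2
  have herfc : erfc (-V / (t * d * g * r))
      = 1 - 2 / p * (-V / (t * d * g * r))
        + (erfc (-V / (t * d * g * r)) - 1 + 2 / p * (-V / (t * d * g * r))) := by ring
  have hexp : Real.exp (-V ^ 2 / (2 * (t * d * g) ^ 2))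
      = 1 + (Real.exp (-V ^ 2 / (2 * (t * d * g) ^ 2)) - 1) := by ring
  rw [herfc, hexp, key_id ht0 hd0 hg0 hp0 hr0 ht2 hg2 hr2]
  have hA : |erfc (-V / (t * d * g * r)) - 1 + 2 / p * (-V / (t * d * g * r))|
      ≤ 2 / p * |(-V / (t * d * g * r))| ^ 3 := abs_erfc_taylor _
  have hE : |Real.exp (-V ^ 2 / (2 * (t * d * g) ^ 2)) - 1|
      ≤ V ^ 2 / (2 * (t * d * g) ^ 2) := by
    have hx : (0:ℝ) ≤ V ^ 2 / (2 * (t * d * g) ^ 2) :=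
      div_nonneg (sq_nonneg V) (by positivity)
    have := exp_bound (V ^ 2 / (2 * (t * d * g) ^ 2)) hx
    rwa [← neg_div] at this
  exact bound_main hγ hD hμ ht0 hd0 hg0 hp0 hr0 ht2 hd2 hg2 hr2 hA hE
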